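/- arXiv:1511.00282 — 2 statements merged into one kernel-verified Lean document; each statement's English description precedes it below -/
import Mathlib

section
/- Under the spiked condition on Σ_w and with p > s + K − 1, if U_O is an orthogonal matrix diagonalizing Σ_γ = Σ_w + γ Σ_b (γ > 0) with eigenvalues in descending order, partitioned as U_O = (U_{O1}, U_{O2}) with U_{O1} of size p×(s+K−1), then U_{O2}ᵀ Σ_w⁻¹ (μ_k − μ_ℓ) = 0 for all 1 ≤ k < ℓ ≤ K, i.e., all Bayes discriminant directions Σ_w⁻¹(μ_k − μ_ℓ) lie in the column span of U_{O1}. -/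
open Matrix Finset

lemma aux_sum_vecMulVec_mulVec {n ι : Type*} [Fintype n] [Fintype ι]
    (c : ι → ℝ) (x : ι → n → ℝ) (v : n → ℝ) :
    (∑ i, c i • Matrix.vecMulVec (x i) (x i)) *ᵥ v
      = ∑ i, (c i * (x i ⬝ᵥ v)) • x i := by
  funext a
  simp only [Matrix.mulVec, dotProduct, Finset.sum_apply, Matrix.sum_apply,
    Matrix.smul_apply, Matrix.vecMulVec_apply, Pi.smul_apply, smul_eq_mul,
    Finset.sum_mul, Finset.mul_sum]
  rw [Finset.sum_comm]
  exact Finset.sum_congr rfl fun i _ => Finset.sum_congr rfl fun b _ => by ring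

lemma aux_dot_sum {n ι : Type*} [Fintype n] [Fintype ι] (v : n → ℝ) (w : ι → n → ℝ) :
    v ⬝ᵥ (∑ i, w i) = ∑ i, v ⬝ᵥ (w i) := by
  simp only [dotProduct, Finset.sum_apply, Finset.mul_sum]
  rw [Finset.sum_comm]

/-- Theorem 1 of the paper: Under the spiked condition on `Σw`
and `p > s + K − 1`, if the orthogonal matrix `U` diagonalizes
`Σγ = Σw + γ Σb` with eigenvalues in descending order, then the columns of
`U` with index `≥ s + K − 1` (i.e. `U_{O2}`) are orthogonal to all Bayes
discriminant directions `Σw⁻¹ (μ k − μ ℓ)`; that is,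
`U_{O2}ᵀ Σw⁻¹ (μ k − μ ℓ) = 0` for all `k < ℓ`. -/
theorem reduced_rank_lda_no_information_loss
    (p s K : ℕ) (hp : s + K - 1 < p)
    (lam : Fin p → ℝ) (lamp : ℝ)
    (ξ : Fin p → (Fin p → ℝ))
    (horth : ∀ i j : Fin p, ξ i ⬝ᵥ ξ j = if i = j then 1 else 0)
    (hdesc : ∀ i j : Fin p, i ≤ j → lam j ≤ lam i)
    (Sw : Matrix (Fin p) (Fin p) ℝ)
    (hspec : Sw = ∑ i : Fin p, lam i • vecMulVec (ξ i) (ξ i))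
    (htail : ∀ i : Fin p, s ≤ (i : ℕ) → lam i = lamp)
    (hspike : ∀ i : Fin p, (i : ℕ) < s → lamp < lam i)
    (hpos : 0 < lamp)
    (π : Fin K → ℝ) (hπ : ∀ k, 0 < π k) (hπ1 : ∑ k, π k = 1)
    (μ : Fin K → (Fin p → ℝ)) (hcenter : ∑ k, π k • μ k = 0)
    (Sb : Matrix (Fin p) (Fin p) ℝ)
    (hSb : Sb = ∑ k : Fin K, π k • vecMulVec (μ k) (μ k))
    (γ : ℝ) (hγ : 0 < γ)
    (Sγ : Matrix (Fin p) (Fin p) ℝ) (hSγ : Sγ = Sw + γ • Sb)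
    (U : Matrix (Fin p) (Fin p) ℝ)
    (hUorth : U ∈ Matrix.orthogonalGroup (Fin p) ℝ)
    (d : Fin p → ℝ) (hddesc : ∀ i j : Fin p, i ≤ j → d j ≤ d i)
    (hdiag : Uᵀ * Sγ * U = Matrix.diagonal d) :
    ∀ k ℓ : Fin K, k < ℓ →
      ∀ j : Fin p, s + K - 1 ≤ (j : ℕ) →
        (fun i => U i j) ⬝ᵥ (Sw⁻¹ *ᵥ (μ k - μ ℓ)) = 0 := by
  intro k ℓ hkℓ j hj
  classical
  have hK : 0 < K := k.pos
  set uc : Fin p → (Fin p → ℝ) := fun t a => U a t with huc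
  -- orthogonality facts for U
  have hU1 : Uᵀ * U = 1 := by
    have := (Matrix.mem_orthogonalGroup_iff' (Fin p) ℝ).mp hUorth
    simpa using this
  have hU2 : U * Uᵀ = 1 := by
    have := (Matrix.mem_orthogonalGroup_iff (Fin p) ℝ).mp hUorth
    simpa using this
  have hucd : ∀ t t' : Fin p, uc t ⬝ᵥ uc t' = if t = t' then 1 else 0 := by
    intro t t'
    have := congrFun (congrFun hU1 t) t'
    simpa [Matrix.mul_apply, Matrix.one_apply, dotProduct, huc] using this
  -- facts about ξ
  have hXi1 : (Matrix.of ξ) * (Matrix.of ξ)ᵀ = 1 := by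
    ext i j'
    have := horth i j'
    simpa [Matrix.mul_apply, Matrix.one_apply, dotProduct] using this
  have hXi2 : (Matrix.of ξ)ᵀ * (Matrix.of ξ) = 1 := mul_eq_one_comm.mp hXi1
  have hXi2' : ∀ a b : Fin p, (∑ i, ξ i a * ξ i b) = if a = b then 1 else 0 := by
    intro a b
    have := congrFun (congrFun hXi2 a) b
    simpa [Matrix.mul_apply, Matrix.one_apply] using this
  have hcompl : ∀ v : Fin p → ℝ, ∑ i, (ξ i ⬝ᵥ v) • ξ i = v := by
    intro v
    funext a
    have h1 : (∑ i, (ξ i ⬝ᵥ v) • ξ i) a = ∑ b, (∑ i, ξ i a * ξ i b) * v b := by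
      simp only [Finset.sum_apply, Pi.smul_apply, smul_eq_mul, dotProduct,
        Finset.sum_mul, Finset.mul_sum]
      rw [Finset.sum_comm]
      exact Finset.sum_congr rfl fun i _ => Finset.sum_congr rfl fun b _ => by ring
    rw [h1]
    simp [hXi2', ite_mul]
  -- mulVec formulas
  have hSwv : ∀ v, Sw *ᵥ v = ∑ i, (lam i * (ξ i ⬝ᵥ v)) • ξ i := by
    intro v; rw [hspec]; exact aux_sum_vecMulVec_mulVec _ _ _
  have hSbv : ∀ v, Sb *ᵥ v = ∑ kk, (π kk * (μ kk ⬝ᵥ v)) • μ kk := by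
    intro v; rw [hSb]; exact aux_sum_vecMulVec_mulVec _ _ _
  -- eigen decomposition
  have hSU : Sγ * U = U * Matrix.diagonal d := by
    have h := congrArg (fun M => U * M) hdiag
    rw [← Matrix.mul_assoc, ← Matrix.mul_assoc, hU2, Matrix.one_mul] at h
    exact h
  have heig : ∀ t, Sγ *ᵥ uc t = d t • uc t := by
    intro t
    funext a
    have h := congrFun (congrFun hSU a) t
    rw [Matrix.mul_diagonal] at h
    simpa [Matrix.mul_apply, Matrix.mulVec, dotProduct, huc, mul_comm] using h
  have hnorm : ∀ t, uc t ⬝ᵥ uc t = 1 := by intro t; simp [hucd]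
  -- quadratic form value of d
  have hdval : ∀ t, d t = (∑ i, lam i * (ξ i ⬝ᵥ uc t) ^ 2)
      + γ * ∑ kk, π kk * (μ kk ⬝ᵥ uc t) ^ 2 := by
    intro t
    have h1 : uc t ⬝ᵥ (Sγ *ᵥ uc t) = d t := by
      rw [heig t, dotProduct_smul, hnorm t]; simp
    rw [← h1, hSγ, Matrix.add_mulVec, Matrix.smul_mulVec, dotProduct_add,
      dotProduct_smul, hSwv, hSbv, aux_dot_sum, aux_dot_sum]
    simp only [dotProduct_smul, smul_eq_mul]
    congr 1
    · exact Finset.sum_congr rfl fun i _ => by rw [dotProduct_comm]; ring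
    · congr 1
      exact Finset.sum_congr rfl fun kk _ => by rw [dotProduct_comm]; ring
  -- Parseval
  have hpar : ∀ t, ∑ i, (ξ i ⬝ᵥ uc t) ^ 2 = 1 := by
    intro t
    have h := congrArg (fun w => uc t ⬝ᵥ w) (hcompl (uc t))
    simp only [aux_dot_sum, dotProduct_smul, smul_eq_mul, hnorm t] at h
    rw [← h]
    exact Finset.sum_congr rfl fun i _ => by rw [dotProduct_comm]; ring
  have hkey : ∀ t, d t = lamp + ((∑ i, (lam i - lamp) * (ξ i ⬝ᵥ uc t) ^ 2)
      + γ * ∑ kk, π kk * (μ kk ⬝ᵥ uc t) ^ 2) := by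
    intro t
    have h2 : ∑ i, lam i * (ξ i ⬝ᵥ uc t) ^ 2
        = lamp * (∑ i, (ξ i ⬝ᵥ uc t) ^ 2) + ∑ i, (lam i - lamp) * (ξ i ⬝ᵥ uc t) ^ 2 := by
      rw [Finset.mul_sum, ← Finset.sum_add_distrib]
      exact Finset.sum_congr rfl fun i _ => by ring
    rw [hdval t, h2, hpar t]
    ring
  have hlamnn : ∀ i : Fin p, 0 ≤ lam i - lamp := by
    intro i
    by_cases his : (i : ℕ) < s
    · linarith [hspike i his]
    · rw [htail i (le_of_not_gt his)]; linarith
  have hsum1nn : ∀ t, 0 ≤ ∑ i, (lam i - lamp) * (ξ i ⬝ᵥ uc t) ^ 2 :=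
    fun t => Finset.sum_nonneg fun i _ => mul_nonneg (hlamnn i) (sq_nonneg _)
  have hsum2nn : ∀ t, 0 ≤ ∑ kk, π kk * (μ kk ⬝ᵥ uc t) ^ 2 :=
    fun t => Finset.sum_nonneg fun kk _ => mul_nonneg (le_of_lt (hπ kk)) (sq_nonneg _)
  -- d j = lamp
  have hdjle : d j ≤ lamp := by
    by_contra hgt
    push_neg at hgt
    -- counting argument
    set g : (Fin s ⊕ Fin (K - 1)) → (Fin p → ℝ) :=
      Sum.elim (fun a => ξ ⟨a.1, by omega⟩) (fun b => μ ⟨b.1 + 1, by omega⟩) with hg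
    set W : Submodule ℝ (Fin p → ℝ) := Submodule.span ℝ (Set.range g) with hW
    have hWξ : ∀ i : Fin p, (i : ℕ) < s → ξ i ∈ W := by
      intro i hi
      apply Submodule.subset_span
      exact ⟨Sum.inl ⟨i.1, hi⟩, by simp [hg]⟩
    have hWμ' : ∀ m : Fin K, (m : ℕ) ≠ 0 → μ m ∈ W := by
      intro m hm
      apply Submodule.subset_span
      refine ⟨Sum.inr ⟨m.1 - 1, by omega⟩, ?_⟩
      simp only [hg, Sum.elim_inr]
      apply congrArg
      apply Fin.ext
      show m.1 - 1 + 1 = m.1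
      omega
    have hWμ : ∀ m : Fin K, μ m ∈ W := by
      intro m
      by_cases hm : (m : ℕ) = 0
      · have h := hcenter
        rw [← Finset.add_sum_erase _ _ (Finset.mem_univ m)] at h
        have hsum : π m • μ m = - ∑ q ∈ Finset.univ.erase m, π q • μ q :=
          eq_neg_of_add_eq_zero_left h
        have hmemsmul : π m • μ m ∈ W := by
          rw [hsum]
          refine Submodule.neg_mem _ (Submodule.sum_mem _ fun q hq => ?_)
          refine Submodule.smul_mem _ _ (hWμ' q ?_)
          have hqm : q ≠ m := (Finset.mem_erase.mp hq).1
          intro hq0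
          exact hqm (Fin.ext (by omega))
        have h2 := Submodule.smul_mem W (π m)⁻¹ hmemsmul
        rwa [smul_smul, inv_mul_cancel₀ (ne_of_gt (hπ m)), one_smul] at h2
      · exact hWμ' m hm
    have hrank : Module.finrank ℝ W ≤ s + (K - 1) := by
      refine le_trans (finrank_range_le_card g) ?_
      simp [Fintype.card_sum]
    -- eigencolumns with eigenvalue > lamp lie in W
    have hmemW : ∀ t : Fin p, lamp < d t → uc t ∈ W := by
      intro t ht
      have hC : lamp • uc t = ∑ i, (lamp * (ξ i ⬝ᵥ uc t)) • ξ i := by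
        conv_lhs => rw [← hcompl (uc t)]
        rw [Finset.smul_sum]
        exact Finset.sum_congr rfl fun i _ => by rw [smul_smul]
      have heq : (d t - lamp) • uc t
          = (∑ i, ((lam i - lamp) * (ξ i ⬝ᵥ uc t)) • ξ i)
            + ∑ kk, (γ * (π kk * (μ kk ⬝ᵥ uc t))) • μ kk := by
        have : (d t - lamp) • uc t = d t • uc t - lamp • uc t := sub_smul _ _ _
        rw [this, ← heig t, hSγ, Matrix.add_mulVec, Matrix.smul_mulVec,
          hSwv, hSbv, hC, Finset.smul_sum]
        rw [add_sub_right_comm, ← Finset.sum_sub_distrib]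
        congr 1
        · exact Finset.sum_congr rfl fun i _ => by rw [← sub_smul]; ring_nf
        · exact Finset.sum_congr rfl fun kk _ => by rw [smul_smul]
      have hne : d t - lamp ≠ 0 := sub_ne_zero.mpr (ne_of_gt ht)
      have hmem : (d t - lamp) • uc t ∈ W := by
        rw [heq]
        refine Submodule.add_mem _ (Submodule.sum_mem _ fun i _ => ?_)
          (Submodule.sum_mem _ fun kk _ => Submodule.smul_mem _ _ (hWμ kk))
        by_cases his : (i : ℕ) < s
        · exact Submodule.smul_mem _ _ (hWξ i his)
        · have h0 : lam i - lamp = 0 := by rw [htail i (le_of_not_gt his)]; ring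
          rw [h0, zero_mul, zero_smul]
          exact Submodule.zero_mem _
      have h2 := Submodule.smul_mem W (d t - lamp)⁻¹ hmem
      rwa [smul_smul, inv_mul_cancel₀ hne, one_smul] at h2
    -- orthonormal family of j+1 vectors inside W
    set n : ℕ := (j : ℕ) + 1 with hn
    have hnp : n ≤ p := j.isLt
    have he : ∀ a : Fin n, (a : ℕ) < p := fun a => lt_of_lt_of_le a.isLt hnp
    set e : Fin n → Fin p := fun a => ⟨a.1, he a⟩ with heq'
    have hde : ∀ a : Fin n, lamp < d (e a) := by
      intro a
      refine lt_of_lt_of_le hgt (hddesc (e a) j ?_)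
      show (e a : ℕ) ≤ (j : ℕ)
      have := a.isLt
      simp only [heq']
      omega
    have hmema : ∀ a : Fin n, uc (e a) ∈ W := fun a => hmemW _ (hde a)
    have heinj : Function.Injective e := by
      intro a b hab
      have h1 : (a : ℕ) = (b : ℕ) := by
        have h2 := congrArg Fin.val hab
        simpa [heq'] using h2
      exact Fin.ext h1
    have hli : LinearIndependent ℝ (fun a : Fin n => uc (e a)) := by
      rw [Fintype.linearIndependent_iff]
      intro gc hgc b
      have h0 := congrArg (fun w => uc (e b) ⬝ᵥ w) hgc
      simp only [aux_dot_sum, dotProduct_smul, smul_eq_mul, dotProduct_zero] at h0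
      rw [Fintype.sum_eq_single b] at h0
      · rw [hucd, if_pos rfl, mul_one] at h0
        exact h0
      · intro a ha
        rw [hucd, if_neg (fun hc => ha (heinj hc).symm), mul_zero]
    have hliW : LinearIndependent ℝ (fun a : Fin n => (⟨uc (e a), hmema a⟩ : W)) := by
      apply LinearIndependent.of_comp W.subtype
      exact hli
    have hcard := hliW.fintype_card_le_finrank
    rw [Fintype.card_fin] at hcard
    omega
  have hdjge : lamp ≤ d j := by
    have := hkey j
    nlinarith [hsum1nn j, hsum2nn j]
  have hdj : d j = lamp := le_antisymm hdjle hdjge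
  -- both sums vanish at j
  have hzero : (∑ i, (lam i - lamp) * (ξ i ⬝ᵥ uc j) ^ 2)
      + γ * ∑ kk, π kk * (μ kk ⬝ᵥ uc j) ^ 2 = 0 := by
    have := hkey j
    rw [hdj] at this
    linarith
  have hs1 : ∑ i, (lam i - lamp) * (ξ i ⬝ᵥ uc j) ^ 2 = 0 := by
    nlinarith [hsum1nn j, hsum2nn j]
  have hs2 : ∑ kk, π kk * (μ kk ⬝ᵥ uc j) ^ 2 = 0 := by
    nlinarith [hsum1nn j, hsum2nn j]
  have hF : ∀ i : Fin p, (i : ℕ) < s → ξ i ⬝ᵥ uc j = 0 := by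
    intro i hi
    have := (Finset.sum_eq_zero_iff_of_nonneg
      (fun i _ => mul_nonneg (hlamnn i) (sq_nonneg _))).mp hs1 i (Finset.mem_univ i)
    have hl : lam i - lamp ≠ 0 := ne_of_gt (by linarith [hspike i hi])
    have := (mul_eq_zero.mp this).resolve_left hl
    exact pow_eq_zero_iff (by norm_num) |>.mp this
  have hG : ∀ kk : Fin K, μ kk ⬝ᵥ uc j = 0 := by
    intro kk
    have := (Finset.sum_eq_zero_iff_of_nonneg
      (fun kk _ => mul_nonneg (le_of_lt (hπ kk)) (sq_nonneg _))).mp hs2 kk (Finset.mem_univ kk)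
    have := (mul_eq_zero.mp this).resolve_left (ne_of_gt (hπ kk))
    exact pow_eq_zero_iff (by norm_num) |>.mp this
  -- Sw acts on uc j as lamp
  have hSwu : Sw *ᵥ uc j = lamp • uc j := by
    rw [hSwv]
    have hC : lamp • uc j = ∑ i, (lamp * (ξ i ⬝ᵥ uc j)) • ξ i := by
      conv_lhs => rw [← hcompl (uc j)]
      rw [Finset.smul_sum]
      exact Finset.sum_congr rfl fun i _ => by rw [smul_smul]
    rw [hC]
    refine Finset.sum_congr rfl fun i _ => ?_
    by_cases his : (i : ℕ) < s
    · rw [hF i his, mul_zero, mul_zero]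
    · rw [htail i (le_of_not_gt his)]
  -- Sw is invertible with explicit inverse
  have hlampos : ∀ i : Fin p, 0 < lam i := by
    intro i
    by_cases his : (i : ℕ) < s
    · linarith [hspike i his]
    · rw [htail i (le_of_not_gt his)]; exact hpos
  have hSwe : ∀ a b : Fin p, Sw a b = ∑ i, lam i * (ξ i a * ξ i b) := by
    intro a b
    rw [hspec]
    simp [Matrix.sum_apply, Matrix.vecMulVec_apply]
  have hSwm : Sw = (Matrix.of ξ)ᵀ * (Matrix.diagonal lam * Matrix.of ξ) := by
    ext a b
    rw [Matrix.mul_apply, hSwe]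
    simp only [Matrix.diagonal_mul, Matrix.transpose_apply, Matrix.of_apply]
    exact Finset.sum_congr rfl fun i _ => by ring
  have hright : Sw * ((Matrix.of ξ)ᵀ * (Matrix.diagonal (fun i => (lam i)⁻¹) * Matrix.of ξ)) = 1 := by
    rw [hSwm]
    calc (Matrix.of ξ)ᵀ * (Matrix.diagonal lam * Matrix.of ξ)
          * ((Matrix.of ξ)ᵀ * (Matrix.diagonal (fun i => (lam i)⁻¹) * Matrix.of ξ))
        = (Matrix.of ξ)ᵀ * (Matrix.diagonal lam
            * ((Matrix.of ξ * (Matrix.of ξ)ᵀ) * (Matrix.diagonal (fun i => (lam i)⁻¹) * Matrix.of ξ))) := by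
          simp only [Matrix.mul_assoc]
      _ = (Matrix.of ξ)ᵀ * ((Matrix.diagonal lam * Matrix.diagonal (fun i => (lam i)⁻¹)) * Matrix.of ξ) := by
          rw [hXi1, Matrix.one_mul, Matrix.mul_assoc]
      _ = (Matrix.of ξ)ᵀ * Matrix.of ξ := by
          rw [Matrix.diagonal_mul_diagonal]
          have : (fun i => lam i * (lam i)⁻¹) = fun _ : Fin p => (1 : ℝ) := by
            funext i; exact mul_inv_cancel₀ (ne_of_gt (hlampos i))
          rw [this, Matrix.diagonal_one, Matrix.one_mul]
      _ = 1 := hXi2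
  have hSwinv : Sw * Sw⁻¹ = 1 := by
    rw [Matrix.inv_eq_right_inv hright]
    exact hright
  -- symmetry of Sw
  have hSwsym : Swᵀ = Sw := by
    ext a b
    rw [Matrix.transpose_apply, hSwe, hSwe]
    exact Finset.sum_congr rfl fun i _ => by ring
  -- finish
  set w : Fin p → ℝ := Sw⁻¹ *ᵥ (μ k - μ ℓ) with hw
  have hSww : Sw *ᵥ w = μ k - μ ℓ := by
    rw [hw, Matrix.mulVec_mulVec, hSwinv, Matrix.one_mulVec]
  have hucw : uc j ⬝ᵥ (μ k - μ ℓ) = lamp * (uc j ⬝ᵥ w) := by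
    rw [← hSww, Matrix.dotProduct_mulVec]
    have h2 : uc j ᵥ* Sw = lamp • uc j := by
      rw [← hSwsym, Matrix.vecMul_transpose, hSwu]
    rw [h2, smul_dotProduct]
    simp
  have hucx : uc j ⬝ᵥ (μ k - μ ℓ) = 0 := by
    rw [dotProduct_sub, dotProduct_comm, hG k, dotProduct_comm, hG ℓ, sub_zero]
  have := hucx.symm.trans hucw
  have hfin : uc j ⬝ᵥ w = 0 := by
    rcases mul_eq_zero.mp this.symm with h | h
    · exact absurd h (ne_of_gt hpos)
    · exact h
  exact hfin
end

section
/- Let F = (Hᵀ, Gᵀ)ᵀ be an orthogonal p×p matrix where H is q×p, let Σ be symmetric positive definite, and let β = Σ⁻¹δ for some δ ∈ ℝ^p. If β lies in the row space of H (i.e., Gβ = 0), then Hβ = (H Σ Hᵀ)⁻¹ H δ. -/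
open Matrix Finset

/-- If `F = (Hᵀ, Gᵀ)ᵀ` is orthogonal, `Σ` is symmetric positive
definite, `β = Σ⁻¹ δ`, and `G β = 0`, then `H β = (H Σ Hᵀ)⁻¹ H δ`. -/
theorem projected_discriminant_direction
    (p q r : ℕ) (hpq : q + r = p)
    (H : Matrix (Fin q) (Fin p) ℝ) (G : Matrix (Fin r) (Fin p) ℝ)
    (hHH : H * Hᵀ = 1) (hGG : G * Gᵀ = 1) (hHG : H * Gᵀ = 0)
    (hcomplete : Hᵀ * H + Gᵀ * G = 1)
    (Sig : Matrix (Fin p) (Fin p) ℝ) (hSym : Sig.IsSymm) (hPD : Sig.PosDef)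
    (δ β : Fin p → ℝ) (hβ : β = Sig⁻¹ *ᵥ δ)
    (hGβ : G *ᵥ β = 0) :
    H *ᵥ β = (H * Sig * Hᵀ)⁻¹ *ᵥ (H *ᵥ δ) := by
  -- δ = Σ β
  have hSigInv : IsUnit Sig.det := isUnit_iff_ne_zero.mpr hPD.det_pos.ne'
  have hδ : Sig *ᵥ β = δ := by
    rw [hβ, mulVec_mulVec, mul_nonsing_inv _ hSigInv, one_mulVec]
  -- β = Hᵀ *ᵥ (H *ᵥ β)
  have hβdecomp : Hᵀ *ᵥ (H *ᵥ β) = β := by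
    have : (Hᵀ * H + Gᵀ * G) *ᵥ β = β := by rw [hcomplete, one_mulVec]
    rw [add_mulVec, ← mulVec_mulVec, ← mulVec_mulVec, hGβ, mulVec_zero, add_zero] at this
    exact this
  -- HΣHᵀ is PosDef
  have hPD2 : (H * Sig * Hᵀ).PosDef := by
    refine Matrix.PosDef.of_dotProduct_mulVec_pos ?_ ?_
    · have := isHermitian_mul_mul_conjTranspose H hPD.1
      rwa [conjTranspose_eq_transpose_of_trivial] at this
    · intro x hx
      have hHx : Hᵀ *ᵥ x ≠ 0 := by
        intro h
        apply hx
        have : H *ᵥ (Hᵀ *ᵥ x) = x := by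
          rw [mulVec_mulVec, hHH, one_mulVec]
        rw [h, mulVec_zero] at this
        exact this.symm ▸ rfl
      have := hPD.dotProduct_mulVec_pos hHx
      convert this using 1
      simp only [star_trivial]
      rw [← mulVec_mulVec, ← mulVec_mulVec, dotProduct_mulVec, ← mulVec_transpose]
  have hUnit : IsUnit (H * Sig * Hᵀ).det := isUnit_iff_ne_zero.mpr hPD2.det_pos.ne'
  have key : (H * Sig * Hᵀ) *ᵥ (H *ᵥ β) = H *ᵥ δ := by
    rw [← hδ, ← mulVec_mulVec _ (H * Sig) Hᵀ, hβdecomp, ← mulVec_mulVec]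
  rw [← key, mulVec_mulVec, nonsing_inv_mul _ hUnit, one_mulVec]
end
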